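/- Let Y ∈ ℝⁿ, let B be a real n×L matrix with spectral norm ‖B‖₂ ≤ B*, and let C(φ), C(φ') be real symmetric n×n matrices, each with eigenvalues bounded below by λ_min > 0, satisfying ‖C(φ) − C(φ')‖₂ ≤ L_φ ‖φ − φ'‖₂ for parameters φ, φ' ∈ ℝˡ. Define the quadratic form Q(β, φ) = (Y − Bβ)ᵀ C(φ)⁻¹ (Y − Bβ) for β ∈ ℝᴸ. Then for all β, β' ∈ ℝᴸ: |Q(β, φ) − Q(β', φ')| ≤ [ (L_φ / λ_min²) · ( ‖Y‖₂² + 2 B* ‖Y‖₂ ‖β‖₂ + (B* ‖β‖₂)² ) ] · ‖φ − φ'‖₂ + [ (B* / λ_min) · ( 2‖Y‖₂ + B*(‖β‖₂ + ‖β'‖₂) ) ] · ‖β − β'‖₂. -/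

import Mathlib

open Matrix

/-- The Euclidean norm `‖x‖₂ = √(Σᵢ xᵢ²)` of a vector `x ∈ ℝⁿ`. -/
noncomputable def vnorm {n : ℕ} (x : Fin n → ℝ) : ℝ :=
  Real.sqrt (∑ i, (x i) ^ 2)

/-- The spectral (operator ℓ²) norm of a real `m × n` matrix: the operator norm
of the induced linear map between Euclidean spaces. -/
noncomputable def specNorm {m n : ℕ} (A : Matrix (Fin m) (Fin n) ℝ) : ℝ :=
  ‖LinearMap.toContinuousLinearMap (Matrix.toEuclideanLin A)‖

lemma vnorm_eq {n : ℕ} (x : Fin n → ℝ) :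
    vnorm x = ‖(WithLp.equiv 2 (Fin n → ℝ)).symm x‖ := by
  rw [vnorm, EuclideanSpace.norm_eq]
  congr 1
  refine Finset.sum_congr rfl fun i _ => ?_
  simp [Real.norm_eq_abs, sq_abs]

lemma vnorm_nonneg {n : ℕ} (x : Fin n → ℝ) : 0 ≤ vnorm x := Real.sqrt_nonneg _

lemma vnorm_neg {n : ℕ} (x : Fin n → ℝ) : vnorm (-x) = vnorm x := by
  simp [vnorm]

lemma vnorm_sq {n : ℕ} (x : Fin n → ℝ) : vnorm x ^ 2 = x ⬝ᵥ x := by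
  rw [vnorm, Real.sq_sqrt (by positivity)]
  simp [dotProduct, sq]

lemma vnorm_sub_le {n : ℕ} (x y : Fin n → ℝ) : vnorm (x - y) ≤ vnorm x + vnorm y := by
  simp only [vnorm_eq]
  rw [show (WithLp.equiv 2 (Fin n → ℝ)).symm (x - y)
      = (WithLp.equiv 2 (Fin n → ℝ)).symm x - (WithLp.equiv 2 (Fin n → ℝ)).symm y from rfl]
  exact norm_sub_le _ _

lemma abs_dot_le {n : ℕ} (x y : Fin n → ℝ) : |x ⬝ᵥ y| ≤ vnorm x * vnorm y := by
  have h := abs_real_inner_le_norm ((WithLp.equiv 2 (Fin n → ℝ)).symm x)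
    ((WithLp.equiv 2 (Fin n → ℝ)).symm y)
  rw [← vnorm_eq, ← vnorm_eq] at h
  have e : (inner ℝ ((WithLp.equiv 2 (Fin n → ℝ)).symm x)
      ((WithLp.equiv 2 (Fin n → ℝ)).symm y) : ℝ) = x ⬝ᵥ y := by
    simp [PiLp.inner_apply, RCLike.inner_apply, dotProduct, mul_comm]
  rwa [e] at h

lemma specNorm_nonneg {m n : ℕ} (A : Matrix (Fin m) (Fin n) ℝ) : 0 ≤ specNorm A :=
  norm_nonneg _

lemma vnorm_mulVec_le {m n : ℕ} (A : Matrix (Fin m) (Fin n) ℝ) (x : Fin n → ℝ) :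
    vnorm (A.mulVec x) ≤ specNorm A * vnorm x := by
  rw [vnorm_eq, vnorm_eq x]
  exact (LinearMap.toContinuousLinearMap (Matrix.toEuclideanLin A)).le_opNorm _

lemma vnorm_pos {n : ℕ} {x : Fin n → ℝ} (hx : x ≠ 0) : 0 < vnorm x := by
  rcases (vnorm_nonneg x).lt_or_eq with h | h
  · exact h
  · exfalso
    apply hx
    have h2 : x ⬝ᵥ x = 0 := by rw [← vnorm_sq, ← h]; ring
    funext i
    have hsum : ∑ j, x j * x j = 0 := h2
    have := (Finset.sum_eq_zero_iff_of_nonneg (fun j _ => mul_self_nonneg (x j))).mp hsum i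
      (Finset.mem_univ i)
    exact mul_self_eq_zero.mp this

lemma inv_facts {n : ℕ} {C : Matrix (Fin n) (Fin n) ℝ} {lmin : ℝ} (hl : 0 < lmin)
    (hs : C.IsSymm) (hp : (C - lmin • (1 : Matrix (Fin n) (Fin n) ℝ)).PosSemidef) :
    IsUnit C.det ∧ ∀ y, vnorm (C⁻¹.mulVec y) ≤ lmin⁻¹ * vnorm y := by
  have hquad : ∀ x : Fin n → ℝ, lmin * vnorm x ^ 2 ≤ x ⬝ᵥ C.mulVec x := by
    intro x
    have h0 := hp.dotProduct_mulVec_nonneg x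
    rw [star_trivial, sub_mulVec, dotProduct_sub, smul_mulVec, one_mulVec,
      dotProduct_smul] at h0
    rw [vnorm_sq]
    have : lmin • (x ⬝ᵥ x) = lmin * (x ⬝ᵥ x) := rfl
    linarith [h0, this ▸ h0]
  have hherm : C.IsHermitian := by
    rw [Matrix.IsHermitian, Matrix.conjTranspose_eq_transpose_of_trivial]
    exact hs
  have hpd : C.PosDef := by
    refine .of_dotProduct_mulVec_pos hherm fun x hx => ?_
    rw [star_trivial]
    have h1 := hquad x
    have h2 := vnorm_pos hx
    nlinarith [mul_pos hl (pow_pos h2 2)]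
  have hdet : IsUnit C.det := hpd.det_pos.ne'.isUnit
  refine ⟨hdet, fun y => ?_⟩
  have hlow : ∀ x : Fin n → ℝ, lmin * vnorm x ≤ vnorm (C.mulVec x) := by
    intro x
    by_cases hx : x = 0
    · simp [hx, vnorm, Real.sqrt_eq_zero']
    · have h1 := hquad x
      have h2 : x ⬝ᵥ C.mulVec x ≤ vnorm x * vnorm (C.mulVec x) :=
        le_trans (le_abs_self _) (abs_dot_le _ _)
      have h3 := vnorm_pos hx
      nlinarith
  have h4 := hlow (C⁻¹.mulVec y)
  rw [Matrix.mulVec_mulVec, Matrix.mul_nonsing_inv _ hdet, Matrix.one_mulVec] at h4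
  exact (le_inv_mul_iff₀ hl).mpr h4

/-- The quadratic form `Q(β, φ) = (Y − Bβ)ᵀ C(φ)⁻¹ (Y − Bβ)`. -/
noncomputable def quadForm {n L l : ℕ} (Y : Fin n → ℝ)
    (B : Matrix (Fin n) (Fin L) ℝ) (Cm : (Fin l → ℝ) → Matrix (Fin n) (Fin n) ℝ)
    (β : Fin L → ℝ) (φ : Fin l → ℝ) : ℝ :=
  (Y - B.mulVec β) ⬝ᵥ (Cm φ)⁻¹.mulVec (Y - B.mulVec β)

/-- **Composite Lipschitz bound for the quadratic term** of the Gaussian-process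
log-likelihood:
`|Q(β,φ) − Q(β',φ')| ≤ (L_φ/λ_min²)(‖Y‖² + 2B*‖Y‖‖β‖ + (B*‖β‖)²)‖φ − φ'‖
  + (B*/λ_min)(2‖Y‖ + B*(‖β‖ + ‖β'‖))‖β − β'‖`. -/
theorem quadForm_lipschitz {n L l : ℕ} (Y : Fin n → ℝ)
    (B : Matrix (Fin n) (Fin L) ℝ) (Bstar : ℝ) (hB : specNorm B ≤ Bstar)
    (Cm : (Fin l → ℝ) → Matrix (Fin n) (Fin n) ℝ)
    (lmin Lphi : ℝ) (hl : 0 < lmin) (φ φ' : Fin l → ℝ)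
    (hsymm : (Cm φ).IsSymm) (hsymm' : (Cm φ').IsSymm)
    (hpsd : (Cm φ - lmin • (1 : Matrix (Fin n) (Fin n) ℝ)).PosSemidef)
    (hpsd' : (Cm φ' - lmin • (1 : Matrix (Fin n) (Fin n) ℝ)).PosSemidef)
    (hLip : specNorm (Cm φ - Cm φ') ≤ Lphi * vnorm (φ - φ'))
    (β β' : Fin L → ℝ) :
    |quadForm Y B Cm β φ - quadForm Y B Cm β' φ'| ≤
      (Lphi / lmin ^ 2) *
          (vnorm Y ^ 2 + 2 * Bstar * vnorm Y * vnorm β + (Bstar * vnorm β) ^ 2) *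
          vnorm (φ - φ') +
        (Bstar / lmin) * (2 * vnorm Y + Bstar * (vnorm β + vnorm β')) *
          vnorm (β - β') := by
  obtain ⟨hdet, hinv⟩ := inv_facts hl hsymm hpsd
  obtain ⟨hdet', hinv'⟩ := inv_facts hl hsymm' hpsd'
  set r : Fin n → ℝ := Y - B.mulVec β with hr
  set r' : Fin n → ℝ := Y - B.mulVec β' with hr'
  have hB0 : (0 : ℝ) ≤ Bstar := le_trans (specNorm_nonneg _) hB
  have hc : (0 : ℝ) ≤ lmin⁻¹ := (inv_pos.mpr hl).le
  have hK : (0 : ℝ) ≤ Lphi * vnorm (φ - φ') := le_trans (specNorm_nonneg _) hLip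
  -- residual norm bounds
  have hrY : vnorm r ≤ vnorm Y + Bstar * vnorm β := by
    refine le_trans (vnorm_sub_le _ _) ?_
    have := (vnorm_mulVec_le B β).trans (mul_le_mul_of_nonneg_right hB (vnorm_nonneg β))
    linarith
  have hr'Y : vnorm r' ≤ vnorm Y + Bstar * vnorm β' := by
    refine le_trans (vnorm_sub_le _ _) ?_
    have := (vnorm_mulVec_le B β').trans (mul_le_mul_of_nonneg_right hB (vnorm_nonneg β'))
    linarith
  -- difference decomposition
  have key : quadForm Y B Cm β φ - quadForm Y B Cm β' φ'
      = r ⬝ᵥ ((Cm φ)⁻¹ - (Cm φ')⁻¹).mulVec r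
        + ((r - r') ⬝ᵥ (Cm φ')⁻¹.mulVec r + r' ⬝ᵥ (Cm φ')⁻¹.mulVec (r - r')) := by
    simp only [quadForm, ← hr, ← hr', sub_mulVec, mulVec_sub, dotProduct_sub,
      sub_dotProduct]
    ring
  -- Term 1
  have hMeq : ((Cm φ)⁻¹ - (Cm φ')⁻¹).mulVec r
      = (Cm φ)⁻¹.mulVec ((Cm φ' - Cm φ).mulVec ((Cm φ')⁻¹.mulVec r)) := by
    rw [Matrix.mulVec_mulVec, Matrix.mulVec_mulVec]
    rw [Matrix.mul_sub, Matrix.sub_mul, Matrix.mul_assoc _ (Cm φ') _,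
      Matrix.mul_nonsing_inv _ hdet', Matrix.mul_one, Matrix.nonsing_inv_mul _ hdet,
      Matrix.one_mul]
  have e1 : vnorm ((Cm φ')⁻¹.mulVec r) ≤ lmin⁻¹ * vnorm r := hinv' r
  have e2 : vnorm ((Cm φ' - Cm φ).mulVec ((Cm φ')⁻¹.mulVec r))
      ≤ Lphi * vnorm (φ - φ') * (lmin⁻¹ * vnorm r) := by
    calc vnorm ((Cm φ' - Cm φ).mulVec ((Cm φ')⁻¹.mulVec r))
        = vnorm ((Cm φ - Cm φ').mulVec ((Cm φ')⁻¹.mulVec r)) := by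
          rw [← neg_sub (Cm φ) (Cm φ'), Matrix.neg_mulVec, vnorm_neg]
      _ ≤ specNorm (Cm φ - Cm φ') * vnorm ((Cm φ')⁻¹.mulVec r) := vnorm_mulVec_le _ _
      _ ≤ Lphi * vnorm (φ - φ') * (lmin⁻¹ * vnorm r) :=
          mul_le_mul hLip e1 (vnorm_nonneg _) hK
  have e3 : vnorm (((Cm φ)⁻¹ - (Cm φ')⁻¹).mulVec r)
      ≤ lmin⁻¹ * (Lphi * vnorm (φ - φ') * (lmin⁻¹ * vnorm r)) := by
    rw [hMeq]
    exact (hinv _).trans (mul_le_mul_of_nonneg_left e2 hc)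
  have t1 : |r ⬝ᵥ ((Cm φ)⁻¹ - (Cm φ')⁻¹).mulVec r|
      ≤ vnorm r * (lmin⁻¹ * (Lphi * vnorm (φ - φ') * (lmin⁻¹ * vnorm r))) :=
    (abs_dot_le _ _).trans (mul_le_mul_of_nonneg_left e3 (vnorm_nonneg r))
  -- Term 2
  have hrr' : vnorm (r - r') ≤ Bstar * vnorm (β - β') := by
    have hrw : r - r' = B.mulVec (β' - β) := by
      rw [hr, hr', Matrix.mulVec_sub]
      abel
    rw [hrw]
    calc vnorm (B.mulVec (β' - β)) ≤ specNorm B * vnorm (β' - β) := vnorm_mulVec_le _ _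
      _ = specNorm B * vnorm (β - β') := by rw [← neg_sub β β', vnorm_neg]
      _ ≤ Bstar * vnorm (β - β') := mul_le_mul_of_nonneg_right hB (vnorm_nonneg _)
  have t2a : |(r - r') ⬝ᵥ (Cm φ')⁻¹.mulVec r|
      ≤ Bstar * vnorm (β - β') * (lmin⁻¹ * vnorm r) :=
    (abs_dot_le _ _).trans
      (mul_le_mul hrr' (hinv' r) (vnorm_nonneg _)
        (mul_nonneg hB0 (vnorm_nonneg _)))
  have t2b : |r' ⬝ᵥ (Cm φ')⁻¹.mulVec (r - r')|
      ≤ vnorm r' * (lmin⁻¹ * (Bstar * vnorm (β - β'))) :=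
    (abs_dot_le _ _).trans
      (mul_le_mul_of_nonneg_left
        ((hinv' _).trans (mul_le_mul_of_nonneg_left hrr' hc)) (vnorm_nonneg r'))
  -- combine
  rw [key]
  have habs : |r ⬝ᵥ ((Cm φ)⁻¹ - (Cm φ')⁻¹).mulVec r
      + ((r - r') ⬝ᵥ (Cm φ')⁻¹.mulVec r + r' ⬝ᵥ (Cm φ')⁻¹.mulVec (r - r'))|
      ≤ |r ⬝ᵥ ((Cm φ)⁻¹ - (Cm φ')⁻¹).mulVec r|
        + (|(r - r') ⬝ᵥ (Cm φ')⁻¹.mulVec r| + |r' ⬝ᵥ (Cm φ')⁻¹.mulVec (r - r')|) :=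
    (abs_add_le _ _).trans (by gcongr; exact abs_add_le _ _)
  refine le_trans habs ?_
  rw [div_eq_mul_inv, div_eq_mul_inv, ← inv_pow]
  have hu0 : 0 ≤ vnorm Y + Bstar * vnorm β :=
    le_trans (vnorm_nonneg r) hrY
  have hd0 : 0 ≤ vnorm (β - β') := vnorm_nonneg _
  have hsq : vnorm r * vnorm r ≤ (vnorm Y + Bstar * vnorm β) * (vnorm Y + Bstar * vnorm β) :=
    mul_le_mul hrY hrY (vnorm_nonneg _) hu0
  nlinarith [mul_nonneg (mul_nonneg hc hc) hK, mul_nonneg hB0 hc,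
    mul_nonneg (mul_nonneg hB0 hd0) hc, vnorm_nonneg r, vnorm_nonneg r',
    mul_le_mul_of_nonneg_left hsq (mul_nonneg (mul_nonneg hc hc) hK),
    mul_le_mul_of_nonneg_left hrY (mul_nonneg (mul_nonneg hB0 hd0) hc),
    mul_le_mul_of_nonneg_left hr'Y (mul_nonneg (mul_nonneg hB0 hd0) hc)]
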